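/- arXiv:2206.13364 — 2 statements merged into one kernel-verified Lean document; each statement's English description precedes it below -/
import Mathlib

section
/- Consider an SRLK steady-state branch with no allostery, i.e. K_i = K_i' for all i = 1, …, n, and let N° = min(N_1, …, N_n). Let z̄ = (−1 + K_0·(N_z − N_1) + √((1 + K_0·(N_1 − N_z))² + 4·K_0·N_z))/(2·K_0). Then lim_{L→+∞} σ(L) = (K_0·z̄/(1 + K_0·z̄))·N° and lim_{L→+∞} δ(L) = N°/(1 + K_0·z̄). -/
/-! SRLK model with `n+1` trans-membrane chains `X_1, …, X_{n+1}` (indexed by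
`Fin (n+1)`, so the paper's "`n ≥ 1` chains" corresponds to `n+1` here), an extrinsic
kinase `Z` with affinity `K0`, signalling affinities `K i`, dummy affinities `K' i`,
and total copy numbers `Nz` and `N i`. -/

/-- The signalling function `σ = K0·z·L·Π_j (K_j·x_j)`. -/
def srlkSigma (n : ℕ) (K0 : ℝ) (K : Fin (n+1) → ℝ) (z L : ℝ)
    (x : Fin (n+1) → ℝ) : ℝ :=
  K0 * z * L * ∏ j, (K j * x j)

/-- The dummy function `δ = L·Π_j (K'_j·x_j)`. -/
def srlkDelta (n : ℕ) (K' : Fin (n+1) → ℝ) (L : ℝ) (x : Fin (n+1) → ℝ) : ℝ :=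
  L * ∏ j, (K' j * x j)

/-- The SRLK steady-state equations at ligand concentration `L`. -/
def srlkSteady (n : ℕ) (K0 : ℝ) (K K' : Fin (n+1) → ℝ) (Nz : ℝ)
    (N : Fin (n+1) → ℝ) (L z : ℝ) (x : Fin (n+1) → ℝ) : Prop :=
  Nz = z + K0 * z * (x 0 + ∑ j ∈ Finset.Ioi (0 : Fin (n+1)),
      (∏ l ∈ Finset.Iio j, (K l * x l)) * x j) + srlkSigma n K0 K z L x ∧
  N 0 = x 0 + (∑ j ∈ Finset.Ioi (0 : Fin (n+1)),
        (∏ l ∈ Finset.Iio j, (K' l * x l)) * x j)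
      + srlkDelta n K' L x
      + K0 * z * (x 0 + ∑ j ∈ Finset.Ioi (0 : Fin (n+1)),
        (∏ l ∈ Finset.Iio j, (K l * x l)) * x j)
      + srlkSigma n K0 K z L x ∧
  ∀ i : Fin (n+1), 0 < i →
    N i = x i + (∑ j ∈ Finset.Ici i,
        ((∏ l ∈ Finset.Iio j, (K' l * x l)) * x j
          + K0 * z * (∏ l ∈ Finset.Iio j, (K l * x l)) * x j))
      + srlkDelta n K' L x + srlkSigma n K0 K z L x

/-- `f` is an algebraic function on `(0, ∞)`: it satisfies a monic polynomial equation
whose coefficients are rational functions with denominators nowhere vanishing on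
`(0, ∞)`. -/
def AlgebraicOnIoi (f : ℝ → ℝ) : Prop :=
  ∃ m : ℕ, 1 ≤ m ∧ ∃ p q : Fin m → Polynomial ℝ,
    (∀ i : Fin m, ∀ L : ℝ, 0 < L → (q i).eval L ≠ 0) ∧
    ∀ L : ℝ, 0 < L →
      f L ^ m + ∑ i : Fin m, ((p i).eval L / (q i).eval L) * f L ^ (i : ℕ) = 0

/-- An SRLK steady-state branch: continuous positive functions `z, x_1, …, x_{n+1}` on
`(0, ∞)` satisfying the SRLK steady-state equations for every `L > 0`, with
`z`, each `x_i`, `σ` and `δ` bounded and algebraic on `(0, ∞)`. -/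
structure SRLKBranch (n : ℕ) (K0 : ℝ) (K K' : Fin (n+1) → ℝ) (Nz : ℝ)
    (N : Fin (n+1) → ℝ) (z : ℝ → ℝ) (x : Fin (n+1) → ℝ → ℝ) : Prop where
  contZ : ContinuousOn z (Set.Ioi 0)
  contX : ∀ i, ContinuousOn (x i) (Set.Ioi 0)
  posZ : ∀ L : ℝ, 0 < L → 0 < z L
  posX : ∀ i, ∀ L : ℝ, 0 < L → 0 < x i L
  steady : ∀ L : ℝ, 0 < L → srlkSteady n K0 K K' Nz N L (z L) (fun i => x i L)
  bddZ : ∃ C : ℝ, ∀ L : ℝ, 0 < L → |z L| ≤ C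
  bddX : ∀ i, ∃ C : ℝ, ∀ L : ℝ, 0 < L → |x i L| ≤ C
  bddSigma : ∃ C : ℝ, ∀ L : ℝ, 0 < L →
    |srlkSigma n K0 K (z L) L (fun i => x i L)| ≤ C
  bddDelta : ∃ C : ℝ, ∀ L : ℝ, 0 < L → |srlkDelta n K' L (fun i => x i L)| ≤ C
  algZ : AlgebraicOnIoi z
  algX : ∀ i, AlgebraicOnIoi (x i)
  algSigma : AlgebraicOnIoi (fun L => srlkSigma n K0 K (z L) L (fun i => x i L))
  algDelta : AlgebraicOnIoi (fun L => srlkDelta n K' L (fun i => x i L))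

open Filter Polynomial in
lemma exists_lim_of_alg (f : ℝ → ℝ) (hc : ContinuousOn f (Set.Ioi 0))
    (hb : ∃ C, ∀ L, 0 < L → |f L| ≤ C) (ha : AlgebraicOnIoi f) :
    ∃ c, Filter.Tendsto f Filter.atTop (nhds c) := by
  obtain ⟨C, hC⟩ := hb
  obtain ⟨m, _hm, p, q, hq, heq⟩ := ha
  have hbddle : Filter.IsBoundedUnder (· ≤ ·) Filter.atTop f :=
    ⟨C, Filter.eventually_map.mpr <| by
      filter_upwards [Filter.eventually_gt_atTop 0] with L hL
      exact (abs_le.mp (hC L hL)).2⟩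
  have hbddge : Filter.IsBoundedUnder (· ≥ ·) Filter.atTop f :=
    ⟨-C, Filter.eventually_map.mpr <| by
      filter_upwards [Filter.eventually_gt_atTop 0] with L hL
      exact (abs_le.mp (hC L hL)).1⟩
  set a := Filter.liminf f Filter.atTop with ha'
  set b := Filter.limsup f Filter.atTop with hb'
  have hab : a ≤ b := Filter.liminf_le_limsup hbddle hbddge
  rcases eq_or_lt_of_le hab with h | h
  · exact ⟨b, tendsto_of_liminf_eq_limsup h rfl hbddle hbddge⟩
  exfalso
  -- values in (a,b) are attained at arbitrarily large arguments
  have hattain : ∀ y ∈ Set.Ioo a b, ∀ M : ℝ, ∃ L, M < L ∧ 0 < L ∧ f L = y := by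
    intro y hy M
    obtain ⟨L₁, hL₁, h1⟩ := Filter.frequently_atTop.mp
      (Filter.frequently_lt_of_liminf_lt hbddle.isCoboundedUnder_ge hy.1) (max (M+1) 1)
    obtain ⟨L₂, hL₂, h2⟩ := Filter.frequently_atTop.mp
      (Filter.frequently_lt_of_lt_limsup hbddge.isCoboundedUnder_le hy.2) (max (M+1) 1)
    have hsub : Set.uIcc L₁ L₂ ⊆ Set.Ioi 0 := by
      intro t ht
      have : min L₁ L₂ ≤ t := ht.1
      have h1' : (1:ℝ) ≤ L₁ := le_trans (le_max_right _ _) hL₁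
      have h2' : (1:ℝ) ≤ L₂ := le_trans (le_max_right _ _) hL₂
      have : (1:ℝ) ≤ t := le_trans (le_min h1' h2') this
      exact lt_of_lt_of_le one_pos this
    have hy' : y ∈ Set.uIcc (f L₁) (f L₂) :=
      Set.Icc_subset_uIcc ⟨le_of_lt h1, le_of_lt h2⟩
    obtain ⟨L, hLmem, hfL⟩ := intermediate_value_uIcc (hc.mono hsub) hy'
    refine ⟨L, ?_, hsub hLmem, hfL⟩
    have hm1 : M + 1 ≤ L₁ := le_trans (le_max_left _ _) hL₁
    have hm2 : M + 1 ≤ L₂ := le_trans (le_max_left _ _) hL₂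
    have : min L₁ L₂ ≤ L := hLmem.1
    linarith [le_min hm1 hm2]
  set Q : Polynomial ℝ := ∏ i, q i with hQdef
  have hk : ∀ y, ∀ L, 0 < L → f L = y →
      (Polynomial.C (y^m) * Q + ∑ i : Fin m,
        Polynomial.C (y^(i:ℕ)) * (p i * ∏ j ∈ Finset.univ.erase i, q j)).eval L = 0 := by
    intro y L hL hfy
    have h0 := heq L hL
    rw [hfy] at h0
    have hterm : ∀ i : Fin m, (p i).eval L * ∏ j ∈ Finset.univ.erase i, (q j).eval L
        = ((p i).eval L / (q i).eval L) * ∏ j, (q j).eval L := by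
      intro i
      rw [← Finset.mul_prod_erase Finset.univ (fun j => (q j).eval L) (Finset.mem_univ i)]
      rw [div_mul_eq_mul_div, mul_comm ((q i).eval L), mul_div_assoc,
        mul_div_assoc, div_self (hq i L hL), mul_one]
    have hexp : (Polynomial.C (y^m) * Q + ∑ i : Fin m,
        Polynomial.C (y^(i:ℕ)) * (p i * ∏ j ∈ Finset.univ.erase i, q j)).eval L
        = (∏ j, (q j).eval L) *
          (y ^ m + ∑ i : Fin m, ((p i).eval L / (q i).eval L) * y ^ (i:ℕ)) := by
      simp only [Polynomial.eval_add, Polynomial.eval_mul, Polynomial.eval_C,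
        Polynomial.eval_finset_sum, Polynomial.eval_prod, hQdef, Finset.mul_sum]
      rw [mul_add, Finset.mul_sum, mul_comm (y^m)]
      congr 1
      refine Finset.sum_congr rfl fun i _ => ?_
      rw [hterm i]
      ring
    rw [hexp, h0, mul_zero]
  have hF0 : ∀ y ∈ Set.Ioo a b, (Polynomial.C (y^m) * Q + ∑ i : Fin m,
      Polynomial.C (y^(i:ℕ)) * (p i * ∏ j ∈ Finset.univ.erase i, q j)) = 0 := by
    intro y hy
    by_contra hne
    have hfin : {x | Polynomial.IsRoot _ x}.Finite := Polynomial.finite_setOf_isRoot hne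
    obtain ⟨M, hM⟩ := hfin.bddAbove
    obtain ⟨L, hML, hL0, hfL⟩ := hattain y hy M
    exact absurd (hM (hk y L hL0 hfL)) (not_le.mpr hML)
  set G : Polynomial ℝ := Polynomial.C (Q.eval 1) * Polynomial.X^m +
    ∑ i : Fin m, Polynomial.C ((p i * ∏ j ∈ Finset.univ.erase i, q j).eval 1)
      * Polynomial.X^(i:ℕ) with hGdef
  have hGroot : Set.Ioo a b ⊆ {y | G.IsRoot y} := by
    intro y hy
    have h1 := congrArg (Polynomial.eval (1:ℝ)) (hF0 y hy)
    simp only [Polynomial.eval_add, Polynomial.eval_mul, Polynomial.eval_C,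
      Polynomial.eval_finset_sum, Polynomial.eval_zero] at h1
    show G.eval y = 0
    simp only [hGdef, Polynomial.eval_add, Polynomial.eval_mul, Polynomial.eval_C,
      Polynomial.eval_finset_sum, Polynomial.eval_pow, Polynomial.eval_X]
    rw [← h1]
    ring_nf
  have hG0 : G = 0 := Polynomial.eq_zero_of_infinite_isRoot G
    ((Set.Ioo_infinite h).mono hGroot)
  have hQ1 : Q.eval 1 ≠ 0 := by
    rw [hQdef, Polynomial.eval_prod]
    exact Finset.prod_ne_zero_iff.mpr fun i _ => hq i 1 one_pos
  have hcoeff : G.coeff m = Q.eval 1 := by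
    simp only [hGdef, Polynomial.coeff_add, Polynomial.coeff_C_mul,
      Polynomial.coeff_X_pow, Polynomial.finset_sum_coeff]
    have h2 : ∀ i : Fin m, ((p i * ∏ j ∈ Finset.univ.erase i, q j).eval 1)
        * (if m = (i:ℕ) then (1:ℝ) else 0) = 0 := fun i => by
      rw [if_neg (Nat.ne_of_lt i.2).symm, mul_zero]
    rw [Finset.sum_congr rfl fun i _ => h2 i, if_pos trivial]
    simp
  rw [hG0] at hcoeff
  simp at hcoeff
  exact hQ1 hcoeff.symm

/-- along any SRLK steady-state branch with no allostery
(`K_i = K_i'`), with `N° = min_i N_i` and `z̄` the explicit kinase steady state, the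
signalling and dummy functions converge to `(K0·z̄/(1+K0·z̄))·N°` and `N°/(1+K0·z̄)`
respectively, as `L → +∞`. -/
theorem srlk_no_allostery_sigma_delta_limits
    (n : ℕ) (K0 : ℝ) (K K' : Fin (n+1) → ℝ) (Nz : ℝ) (N : Fin (n+1) → ℝ)
    (hK0 : 0 < K0) (hK : ∀ i, 0 < K i) (hK' : ∀ i, 0 < K' i)
    (hNz : 0 < Nz) (hN : ∀ i, 0 < N i)
    (hna : ∀ i, K i = K' i)
    (z : ℝ → ℝ) (x : Fin (n+1) → ℝ → ℝ)
    (hbr : SRLKBranch n K0 K K' Nz N z x) :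
    Filter.Tendsto (fun L => srlkSigma n K0 K (z L) L (fun i => x i L))
      Filter.atTop
      (nhds ((K0 * ((-1 + K0*(Nz - N 0)
            + Real.sqrt ((1 + K0*(N 0 - Nz))^2 + 4*K0*Nz)) / (2*K0))
          / (1 + K0 * ((-1 + K0*(Nz - N 0)
            + Real.sqrt ((1 + K0*(N 0 - Nz))^2 + 4*K0*Nz)) / (2*K0))))
        * Finset.univ.inf' Finset.univ_nonempty N)) ∧
    Filter.Tendsto (fun L => srlkDelta n K' L (fun i => x i L))
      Filter.atTop
      (nhds (Finset.univ.inf' Finset.univ_nonempty N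
        / (1 + K0 * ((-1 + K0*(Nz - N 0)
            + Real.sqrt ((1 + K0*(N 0 - Nz))^2 + 4*K0*Nz)) / (2*K0))))) := by
  obtain rfl : K' = K := funext fun i => (hna i).symm
  have hev : ∀ᶠ L in Filter.atTop, (0:ℝ) < L := Filter.eventually_gt_atTop 0
  have hcontProd : ContinuousOn (fun L => ∏ j, (K' j * x j L)) (Set.Ioi (0:ℝ)) :=
    continuousOn_finset_prod _ fun j _ => continuousOn_const.mul (hbr.contX j)
  have hcσ : ContinuousOn (fun L => srlkSigma n K0 K' (z L) L (fun i => x i L))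
      (Set.Ioi 0) := by
    simp only [srlkSigma]
    exact ((continuousOn_const.mul hbr.contZ).mul continuousOn_id).mul hcontProd
  have hcδ : ContinuousOn (fun L => srlkDelta n K' L (fun i => x i L)) (Set.Ioi 0) := by
    simp only [srlkDelta]
    exact continuousOn_id.mul hcontProd
  -- existence of limits
  obtain ⟨ζ, hz⟩ := exists_lim_of_alg z hbr.contZ hbr.bddZ hbr.algZ
  choose ξ hx using fun i => exists_lim_of_alg (x i) (hbr.contX i) (hbr.bddX i) (hbr.algX i)
  obtain ⟨s, hs⟩ := exists_lim_of_alg _ hcσ hbr.bddSigma hbr.algSigma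
  obtain ⟨d, hd⟩ := exists_lim_of_alg _ hcδ hbr.bddDelta hbr.algDelta
  set σf : ℝ → ℝ := fun L => srlkSigma n K0 K' (z L) L (fun i => x i L) with hσf
  set δf : ℝ → ℝ := fun L => srlkDelta n K' L (fun i => x i L) with hδf
  -- nonnegativity of limits
  have hξ0 : ∀ i, 0 ≤ ξ i := fun i =>
    ge_of_tendsto (hx i) (hev.mono fun L hL => (hbr.posX i L hL).le)
  have hζ0 : 0 ≤ ζ := ge_of_tendsto hz (hev.mono fun L hL => (hbr.posZ L hL).le)
  -- limit of the partial products and sums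
  set π : Fin (n+1) → ℝ := fun j => ∏ l ∈ Finset.Iio j, (K' l * ξ l) with hπ
  have hπlim : ∀ j : Fin (n+1),
      Filter.Tendsto (fun L => ∏ l ∈ Finset.Iio j, (K' l * x l L)) Filter.atTop (nhds (π j)) :=
    fun j => tendsto_finset_prod _ fun l _ => tendsto_const_nhds.mul (hx l)
  set S : ℝ := ∑ j ∈ Finset.Ioi (0 : Fin (n+1)), π j * ξ j with hS
  have hSlim : Filter.Tendsto (fun L => ∑ j ∈ Finset.Ioi (0 : Fin (n+1)),
      (∏ l ∈ Finset.Iio j, (K' l * x l L)) * x j L) Filter.atTop (nhds S) :=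
    tendsto_finset_sum _ fun j _ => (hπlim j).mul (hx j)
  -- limits of the steady-state equations
  have hE0 : N 0 = ξ 0 + S + d + K0 * ζ * (ξ 0 + S) + s := by
    have h1 : Filter.Tendsto (fun L => x 0 L + (∑ j ∈ Finset.Ioi (0 : Fin (n+1)),
        (∏ l ∈ Finset.Iio j, (K' l * x l L)) * x j L) + δf L
        + K0 * z L * (x 0 L + ∑ j ∈ Finset.Ioi (0 : Fin (n+1)),
        (∏ l ∈ Finset.Iio j, (K' l * x l L)) * x j L) + σf L) Filter.atTop
        (nhds (ξ 0 + S + d + K0 * ζ * (ξ 0 + S) + s)) :=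
      ((((hx 0).add hSlim).add hd).add
        ((tendsto_const_nhds.mul hz).mul ((hx 0).add hSlim))).add hs
    refine tendsto_nhds_unique (l := Filter.atTop) tendsto_const_nhds
      (h1.congr' (hev.mono fun L hL => ?_))
    exact ((hbr.steady L hL).2.1).symm
  have hEz : Nz = ζ + K0 * ζ * (ξ 0 + S) + s := by
    have h1 : Filter.Tendsto (fun L => z L
        + K0 * z L * (x 0 L + ∑ j ∈ Finset.Ioi (0 : Fin (n+1)),
        (∏ l ∈ Finset.Iio j, (K' l * x l L)) * x j L) + σf L) Filter.atTop
        (nhds (ζ + K0 * ζ * (ξ 0 + S) + s)) :=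
      (hz.add ((tendsto_const_nhds.mul hz).mul ((hx 0).add hSlim))).add hs
    refine tendsto_nhds_unique (l := Filter.atTop) tendsto_const_nhds
      (h1.congr' (hev.mono fun L hL => ?_))
    exact ((hbr.steady L hL).1).symm
  have hEi : ∀ i : Fin (n+1), 0 < i → N i = ξ i
      + (∑ j ∈ Finset.Ici i, (π j * ξ j + K0 * ζ * π j * ξ j)) + d + s := by
    intro i hi
    have h1 : Filter.Tendsto (fun L => x i L + (∑ j ∈ Finset.Ici i,
        ((∏ l ∈ Finset.Iio j, (K' l * x l L)) * x j L
          + K0 * z L * (∏ l ∈ Finset.Iio j, (K' l * x l L)) * x j L))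
        + δf L + σf L) Filter.atTop
        (nhds (ξ i + (∑ j ∈ Finset.Ici i, (π j * ξ j + K0 * ζ * π j * ξ j)) + d + s)) :=
      (((hx i).add (tendsto_finset_sum _ fun j _ => ((hπlim j).mul (hx j)).add
        (((tendsto_const_nhds.mul hz).mul (hπlim j)).mul (hx j)))).add hd).add hs
    refine tendsto_nhds_unique (l := Filter.atTop) tendsto_const_nhds
      (h1.congr' (hev.mono fun L hL => ?_))
    exact ((hbr.steady L hL).2.2 i hi).symm
  -- no allostery: σ = K0·z·δ
  have hs_eq : s = K0 * ζ * d := by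
    have h1 : Filter.Tendsto (fun L => K0 * z L * δf L) Filter.atTop
        (nhds (K0 * ζ * d)) := (tendsto_const_nhds.mul hz).mul hd
    refine tendsto_nhds_unique hs (h1.congr' (hev.mono fun L hL => ?_))
    simp only [hσf, hδf, srlkSigma, srlkDelta]
    ring
  -- some limit ξ k must vanish
  have hPi0 : ∃ k, ξ k = 0 := by
    by_contra hno
    push_neg at hno
    have hpos : 0 < ∏ j, (K' j * ξ j) :=
      Finset.prod_pos fun j _ => mul_pos (hK' j) (lt_of_le_of_ne (hξ0 j) (Ne.symm (hno j)))
    have hl : Filter.Tendsto δf Filter.atTop Filter.atTop := by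
      have h2 : Filter.Tendsto (fun L => L * ∏ j, (K' j * x j L)) Filter.atTop Filter.atTop :=
        Filter.Tendsto.atTop_mul_pos hpos Filter.tendsto_id
          (tendsto_finset_prod _ fun j _ => tendsto_const_nhds.mul (hx j))
      exact h2
    exact not_tendsto_atTop_of_tendsto_nhds hd hl
  -- d + s is a lower bound for all the N i
  have hπ0 : ∀ j, 0 ≤ π j := fun j =>
    Finset.prod_nonneg fun l _ => mul_nonneg (hK' l).le (hξ0 l)
  have hS0 : 0 ≤ S := Finset.sum_nonneg fun j _ => mul_nonneg (hπ0 j) (hξ0 j)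
  have hds_le : ∀ i, d + s ≤ N i := by
    intro i
    rcases eq_or_ne i 0 with rfl | hi
    · have h2 : 0 ≤ K0 * ζ * (ξ 0 + S) :=
        mul_nonneg (mul_nonneg hK0.le hζ0) (add_nonneg (hξ0 0) hS0)
      have h3 := hξ0 0
      linarith [hE0]
    · have h4 := hEi i (Fin.pos_of_ne_zero hi)
      have h2 : 0 ≤ ∑ j ∈ Finset.Ici i, (π j * ξ j + K0 * ζ * π j * ξ j) :=
        Finset.sum_nonneg fun j _ => add_nonneg (mul_nonneg (hπ0 j) (hξ0 j))
          (mul_nonneg (mul_nonneg (mul_nonneg hK0.le hζ0) (hπ0 j)) (hξ0 j))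
      have h3 := hξ0 i
      linarith
  -- d + s equals some N i
  have hex : ∃ i, N i = d + s := by
    obtain ⟨k, hk0⟩ := hPi0
    rcases eq_or_ne k 0 with rfl | hk
    · refine ⟨0, ?_⟩
      have hS' : S = 0 := Finset.sum_eq_zero fun j hj => by
        have h0mem : (0 : Fin (n+1)) ∈ Finset.Iio j := Finset.mem_Iio.mpr (Finset.mem_Ioi.mp hj)
        have hπj : π j = 0 := Finset.prod_eq_zero h0mem (by rw [hk0, mul_zero])
        rw [hπj, zero_mul]
      rw [hE0, hS', hk0]
      ring
    · refine ⟨k, ?_⟩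
      have hkpos : 0 < k := Fin.pos_of_ne_zero hk
      have hT : ∑ j ∈ Finset.Ici k, (π j * ξ j + K0 * ζ * π j * ξ j) = 0 :=
        Finset.sum_eq_zero fun j hj => by
          rcases eq_or_lt_of_le (Finset.mem_Ici.mp hj) with rfl | hlt
          · rw [hk0]; ring
          · have hπj : π j = 0 := Finset.prod_eq_zero (Finset.mem_Iio.mpr hlt)
              (by rw [hk0, mul_zero])
            rw [hπj]; ring
      rw [hEi k hkpos, hT, hk0]
      ring
  set No : ℝ := Finset.univ.inf' Finset.univ_nonempty N with hNodef
  have hNo_eq : No = d + s := by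
    obtain ⟨i, hi⟩ := hex
    exact le_antisymm (hi ▸ Finset.inf'_le N (Finset.mem_univ i))
      (Finset.le_inf' _ _ fun j _ => hds_le j)
  have h1K : 0 < 1 + K0 * ζ := by nlinarith
  have hDD : d * (1 + K0 * ζ) = No := by linear_combination -hNo_eq - hs_eq
  have hdval : d = No / (1 + K0 * ζ) := by
    rw [eq_div_iff h1K.ne']
    linear_combination hDD
  have hU : (1 + K0 * ζ) * (ξ 0 + S) = N 0 - No := by
    rw [hNo_eq]
    linear_combination -hE0
  have hquad : K0 * ζ^2 + (1 + K0 * (N 0 - Nz)) * ζ - Nz = 0 := by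
    linear_combination (-(1 + K0*ζ)) * hEz + (-(K0*ζ)) * hU
      + (-(1 + K0*ζ)) * hs_eq + (-(K0*ζ)) * hDD
  -- solve the quadratic for ζ
  set bq : ℝ := 1 + K0 * (N 0 - Nz) with hbq
  set D : ℝ := bq^2 + 4*K0*Nz with hDdef
  have hDpos : bq^2 < D := by nlinarith [mul_pos hK0 hNz]
  have hDnn : 0 ≤ D := le_trans (sq_nonneg bq) hDpos.le
  have hsq : (2*K0*ζ + bq)^2 = Real.sqrt D ^ 2 := by
    rw [Real.sq_sqrt hDnn]
    rw [hbq] at hquad ⊢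
    linear_combination 4*K0*hquad
  have h2 : (2*K0*ζ + bq - Real.sqrt D) * (2*K0*ζ + bq + Real.sqrt D) = 0 := by
    linear_combination hsq
  have hroot : 2*K0*ζ + bq = Real.sqrt D := by
    rcases mul_eq_zero.mp h2 with h3 | h3
    · linarith [sub_eq_zero.mp h3]
    · exfalso
      have habs : |bq| < Real.sqrt D := by
        rw [← Real.sqrt_sq_eq_abs]
        exact Real.sqrt_lt_sqrt (sq_nonneg bq) hDpos
      have hbq' : -bq ≤ |bq| := neg_le_abs bq
      nlinarith
  have hζval : (-1 + K0*(Nz - N 0) + Real.sqrt D) / (2*K0) = ζ := by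
    rw [div_eq_iff (by positivity : (2*K0:ℝ) ≠ 0)]
    rw [hbq] at hroot
    linarith
  rw [hζval]
  constructor
  · have hval : K0 * ζ / (1 + K0 * ζ) * No = s := by
      rw [hs_eq, hdval]
      field_simp
    rw [hval]
    exact hs
  · rw [← hdval]
    exact hd
end

section
/- Consider an SRLK steady-state branch with no allostery, i.e. K_i = K_i' for all i = 1, …, n. Then the signalling function σ converges to a finite limit c as L → +∞, and σ(L) ≤ c for every L > 0; in other words, the supremum of σ over (0, ∞) equals lim_{L→+∞} σ(L). -/
namespace SRLKAux

/-- Partial products along the chain, with `ℕ`-indexing. -/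
noncomputable def cP (k y : ℕ → ℝ) (j : ℕ) : ℝ := ∏ l ∈ Finset.range j, (k l * y l)

/-- `R i = ∑_{j=i}^{n} P_j y_j + δ`. -/
noncomputable def cR (n : ℕ) (k y : ℕ → ℝ) (d : ℝ) (i : ℕ) : ℝ :=
  (∑ j ∈ Finset.Ico i (n+1), cP k y j * y j) + d

lemma cP_zero (k y : ℕ → ℝ) : cP k y 0 = 1 := by simp [cP]

lemma cP_succ (k y : ℕ → ℝ) (j : ℕ) : cP k y (j+1) = cP k y j * (k j * y j) :=
  Finset.prod_range_succ _ _

lemma cP_pos {k y : ℕ → ℝ} (hk : ∀ l, 0 < k l) (hy : ∀ l, 0 < y l) (j : ℕ) :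
    0 < cP k y j :=
  Finset.prod_pos fun l _ => mul_pos (hk l) (hy l)

lemma cR_top (n : ℕ) (k y : ℕ → ℝ) (d : ℝ) : cR n k y d (n+1) = d := by
  simp [cR]

lemma cR_peel (n : ℕ) (k y : ℕ → ℝ) (d : ℝ) {i : ℕ} (hi : i ≤ n) :
    cR n k y d i = cP k y i * y i + cR n k y d (i+1) := by
  unfold cR
  rw [Finset.sum_eq_sum_Ico_succ_bot (by omega : i < n+1)]
  ring

lemma cR_pos {n : ℕ} {k y : ℕ → ℝ} {d : ℝ} (hk : ∀ l, 0 < k l) (hy : ∀ l, 0 < y l)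
    (hd : 0 < d) (i : ℕ) : 0 < cR n k y d i := by
  have h : 0 ≤ ∑ j ∈ Finset.Ico i (n+1), cP k y j * y j :=
    Finset.sum_nonneg fun j _ => le_of_lt (mul_pos (cP_pos hk hy j) (hy j))
  unfold cR; linarith

/-- Extension of a `Fin (n+1)`-indexed family to `ℕ`, with default value `1`. -/
noncomputable def extF (n : ℕ) (f : Fin (n+1) → ℝ) : ℕ → ℝ :=
  fun m => if h : m < n+1 then f ⟨m, h⟩ else 1

lemma extF_spec (n : ℕ) (f : Fin (n+1) → ℝ) (m : ℕ) (h : m < n+1) :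
    extF n f m = f ⟨m, h⟩ := dif_pos h

lemma extF_pos {n : ℕ} {f : Fin (n+1) → ℝ} (hf : ∀ i, 0 < f i) (m : ℕ) :
    0 < extF n f m := by
  unfold extF; split
  · exact hf _
  · exact one_pos

lemma prod_Iio_eq (n : ℕ) (f : Fin (n+1) → ℝ) (g : ℕ → ℝ)
    (hg : ∀ (m : ℕ) (h : m < n+1), g m = f ⟨m, h⟩) (j : Fin (n+1)) :
    ∏ l ∈ Finset.Iio j, f l = ∏ m ∈ Finset.range (j : ℕ), g m := by
  have h1 : Finset.range (j : ℕ) = (Finset.Iio j).map Fin.valEmbedding := by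
    rw [Fin.map_valEmbedding_Iio, Nat.Iio_eq_range]
  rw [h1, Finset.prod_map]
  exact Finset.prod_congr rfl fun l _ => (hg l l.isLt).symm

lemma prod_univ_eq (n : ℕ) (f : Fin (n+1) → ℝ) (g : ℕ → ℝ)
    (hg : ∀ (m : ℕ) (h : m < n+1), g m = f ⟨m, h⟩) :
    ∏ l, f l = ∏ m ∈ Finset.range (n+1), g m := by
  rw [← Fin.prod_univ_eq_prod_range g (n+1)]
  exact Finset.prod_congr rfl fun l _ => (hg l l.isLt).symm

lemma sum_Ici_eq (n : ℕ) (f : Fin (n+1) → ℝ) (g : ℕ → ℝ)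
    (hg : ∀ (m : ℕ) (h : m < n+1), g m = f ⟨m, h⟩) (i : Fin (n+1)) :
    ∑ j ∈ Finset.Ici i, f j = ∑ m ∈ Finset.Ico (i : ℕ) (n+1), g m := by
  have h1 : Finset.Ico (i : ℕ) (n+1) = (Finset.Ici i).map Fin.valEmbedding := by
    rw [Fin.map_valEmbedding_Ici, Finset.Ico_add_one_right_eq_Icc]
  rw [h1, Finset.sum_map]
  exact Finset.sum_congr rfl fun l _ => (hg l l.isLt).symm

/-- Core comparison lemma: ordering between two chain steady states propagates
down the chain. -/
lemma core (n : ℕ) (u : ℝ) (hu : 0 ≤ u) (NN : ℕ → ℝ) (k y1 y2 : ℕ → ℝ) (d1 d2 : ℝ)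
    (hk : ∀ l, 0 < k l) (hy1 : ∀ l, 0 < y1 l) (hy2 : ∀ l, 0 < y2 l)
    (h0 : cR n k y1 d1 0 = cR n k y2 d2 0)
    (he1 : ∀ m, 1 ≤ m → m ≤ n → y1 m + (1+u) * cR n k y1 d1 m = NN m)
    (he2 : ∀ m, 1 ≤ m → m ≤ n → y2 m + (1+u) * cR n k y2 d2 m = NN m)
    (h1 : cR n k y1 d1 1 ≤ cR n k y2 d2 1) :
    d1 ≤ d2 ∧ cP k y2 (n+1) ≤ cP k y1 (n+1) := by
  have hy0 : y2 0 ≤ y1 0 := by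
    have p1 := cR_peel n k y1 d1 (Nat.zero_le n)
    have p2 := cR_peel n k y2 d2 (Nat.zero_le n)
    rw [cP_zero, one_mul] at p1 p2
    linarith
  have key : ∀ m, 1 ≤ m → m ≤ n+1 →
      (cR n k y1 d1 m ≤ cR n k y2 d2 m ∧ cP k y2 m ≤ cP k y1 m) := by
    intro m hm
    induction m, hm using Nat.le_induction with
    | base =>
      intro _
      refine ⟨h1, ?_⟩
      have e1 : cP k y1 1 = k 0 * y1 0 := by
        rw [show (1:ℕ) = 0 + 1 from rfl, cP_succ, cP_zero, one_mul]
      have e2 : cP k y2 1 = k 0 * y2 0 := by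
        rw [show (1:ℕ) = 0 + 1 from rfl, cP_succ, cP_zero, one_mul]
      rw [e1, e2]
      exact mul_le_mul_of_nonneg_left hy0 (hk 0).le
    | succ m hm ih =>
      intro hm1
      have hmn : m ≤ n := by omega
      obtain ⟨hR, hP⟩ := ih (by omega)
      have hy : y2 m ≤ y1 m := by
        have e1 := he1 m hm hmn
        have e2 := he2 m hm hmn
        nlinarith [mul_le_mul_of_nonneg_left hR (by linarith : (0:ℝ) ≤ 1+u)]
      have hPy : cP k y2 m * y2 m ≤ cP k y1 m * y1 m :=
        mul_le_mul hP hy (hy2 m).le (cP_pos hk hy1 m).le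
      constructor
      · have q1 := cR_peel n k y1 d1 hmn
        have q2 := cR_peel n k y2 d2 hmn
        linarith
      · rw [cP_succ, cP_succ]
        exact mul_le_mul hP (mul_le_mul_of_nonneg_left hy (hk m).le)
          (mul_nonneg (hk m).le (hy2 m).le) (cP_pos hk hy1 m).le
  have fin := key (n+1) (by omega) le_rfl
  rw [cR_top, cR_top] at fin
  exact fin

/-- Uniqueness of `z` from the two conservation identities. -/
lemma zuniq (K0 N0 Nz a b r1 r2 : ℝ) (hK0 : 0 < K0) (ha : 0 < a) (hb : 0 < b)
    (hr1 : 0 < r1) (hr2 : 0 < r2)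
    (e1 : Nz = a + K0 * a * r1) (e2 : N0 = (1 + K0*a) * r1)
    (e3 : Nz = b + K0 * b * r2) (e4 : N0 = (1 + K0*b) * r2) : a = b := by
  rcases lt_trichotomy a b with h | h | h
  · exfalso
    have hr : r2 = r1 + (b - a) := by linear_combination e2 - e4 + e3 - e1
    have heq : (1 + K0*a) * r1 = (1 + K0*b) * r2 := e2.symm.trans e4
    rw [hr] at heq
    have hba : 0 < b - a := sub_pos.mpr h
    have F1 : 0 < K0 * (b - a) * r1 := mul_pos (mul_pos hK0 hba) hr1
    have F2 : 0 < K0 * b * (b - a) := mul_pos (mul_pos hK0 hb) hba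
    nlinarith [heq, F1, F2, hba]
  · exact h
  · exfalso
    have hr : r1 = r2 + (a - b) := by linear_combination e4 - e2 + e1 - e3
    have heq : (1 + K0*a) * r1 = (1 + K0*b) * r2 := e2.symm.trans e4
    rw [hr] at heq
    have hba : 0 < a - b := sub_pos.mpr h
    have F1 : 0 < K0 * (a - b) * r2 := mul_pos (mul_pos hK0 hba) hr2
    have F2 : 0 < K0 * a * (a - b) := mul_pos (mul_pos hK0 ha) hba
    nlinarith [heq, F1, F2, hba]

/-- Bridge: translate the Fin-indexed steady-state equations into the
`ℕ`-indexed chain quantities. -/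
lemma bridge (n : ℕ) (K0 : ℝ) (K : Fin (n+1) → ℝ) (Nz : ℝ) (N : Fin (n+1) → ℝ)
    (L zv : ℝ) (xv : Fin (n+1) → ℝ)
    (hst : srlkSteady n K0 K K Nz N L zv xv) :
    (srlkDelta n K L xv = L * cP (extF n K) (extF n xv) (n+1)) ∧
    (srlkSigma n K0 K zv L xv = K0 * zv * srlkDelta n K L xv) ∧
    (Nz = zv + K0 * zv * cR n (extF n K) (extF n xv) (srlkDelta n K L xv) 0) ∧
    (N 0 = (1 + K0 * zv) * cR n (extF n K) (extF n xv) (srlkDelta n K L xv) 0) ∧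
    (∀ (m : ℕ) (h : m < n+1), 1 ≤ m →
      extF n xv m + (1 + K0 * zv) * cR n (extF n K) (extF n xv) (srlkDelta n K L xv) m
        = N ⟨m, h⟩) := by
  obtain ⟨S1, S2, S3⟩ := hst
  set d := srlkDelta n K L xv with hd
  have hg : ∀ (m : ℕ) (h : m < n+1),
      extF n K m * extF n xv m = (fun l : Fin (n+1) => K l * xv l) ⟨m, h⟩ := by
    intro m h
    rw [extF_spec n K m h, extF_spec n xv m h]
  have t1 : ∀ j : Fin (n+1),
      (∏ l ∈ Finset.Iio j, (K l * xv l)) = cP (extF n K) (extF n xv) (j : ℕ) := by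
    intro j
    exact prod_Iio_eq n (fun l => K l * xv l) (fun m => extF n K m * extF n xv m) hg j
  have t2 : (∏ j, (K j * xv j)) = cP (extF n K) (extF n xv) (n+1) :=
    prod_univ_eq n (fun l => K l * xv l) (fun m => extF n K m * extF n xv m) hg
  have hdel : d = L * cP (extF n K) (extF n xv) (n+1) := by
    rw [hd]; unfold srlkDelta; rw [t2]
  have hsig : srlkSigma n K0 K zv L xv = K0 * zv * d := by
    rw [hd]; unfold srlkSigma srlkDelta; rw [t2]; ring
  have t3 : ∀ i : Fin (n+1),
      (∑ j ∈ Finset.Ici i, (∏ l ∈ Finset.Iio j, (K l * xv l)) * xv j)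
        = ∑ m ∈ Finset.Ico (i : ℕ) (n+1), cP (extF n K) (extF n xv) m * extF n xv m := by
    intro i
    refine sum_Ici_eq n (fun j => (∏ l ∈ Finset.Iio j, (K l * xv l)) * xv j)
      (fun m => cP (extF n K) (extF n xv) m * extF n xv m) ?_ i
    intro m h
    rw [extF_spec n xv m h, t1 ⟨m, h⟩]
  have t4 : xv 0 + (∑ j ∈ Finset.Ioi (0 : Fin (n+1)),
      (∏ l ∈ Finset.Iio j, (K l * xv l)) * xv j)
      = cR n (extF n K) (extF n xv) d 0 - d := by
    have h00 : (∏ l ∈ Finset.Iio (0 : Fin (n+1)), (K l * xv l)) = 1 := by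
      rw [t1 0]
      exact cP_zero (extF n K) (extF n xv)
    have h01 : xv 0 + (∑ j ∈ Finset.Ioi (0 : Fin (n+1)),
        (∏ l ∈ Finset.Iio j, (K l * xv l)) * xv j)
        = ∑ j ∈ Finset.Ici (0 : Fin (n+1)),
            (∏ l ∈ Finset.Iio j, (K l * xv l)) * xv j := by
      rw [← Finset.Ioi_insert, Finset.sum_insert Finset.notMem_Ioi_self, h00, one_mul]
    rw [h01, t3 0]
    simp only [Fin.val_zero]
    unfold cR
    ring
  refine ⟨hdel, hsig, ?_, ?_, ?_⟩
  · rw [t4, hsig] at S1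
    rw [S1]; ring
  · rw [t4, hsig] at S2
    rw [S2]; ring
  · intro m h hm
    have hpos : (0 : Fin (n+1)) < ⟨m, h⟩ := by
      rw [Fin.lt_def]
      simpa using Nat.pos_of_ne_zero (by omega : m ≠ 0)
    have S3m := S3 ⟨m, h⟩ hpos
    have hsum1 : (∑ j ∈ Finset.Ici (⟨m, h⟩ : Fin (n+1)),
        ((∏ l ∈ Finset.Iio j, (K l * xv l)) * xv j
          + K0 * zv * (∏ l ∈ Finset.Iio j, (K l * xv l)) * xv j))
        = (1 + K0 * zv) * (∑ j ∈ Finset.Ici (⟨m, h⟩ : Fin (n+1)),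
            (∏ l ∈ Finset.Iio j, (K l * xv l)) * xv j) := by
      rw [Finset.mul_sum]
      exact Finset.sum_congr rfl fun j _ => by ring
    rw [hsum1, t3 ⟨m, h⟩, hsig] at S3m
    have hRm : (∑ m' ∈ Finset.Ico (((⟨m, h⟩ : Fin (n+1))) : ℕ) (n+1),
        cP (extF n K) (extF n xv) m' * extF n xv m')
        = cR n (extF n K) (extF n xv) d m - d := by
      show (∑ m' ∈ Finset.Ico m (n+1), cP (extF n K) (extF n xv) m' * extF n xv m')
        = cR n (extF n K) (extF n xv) d m - d
      unfold cR; ring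
    rw [hRm] at S3m
    rw [extF_spec n xv m h, S3m]
    ring

end SRLKAux

/-- A function on `(0,∞)` that is monotone there and bounded above tends to the
supremum of its values, which is also an upper bound. -/
lemma SRLKAux.sup_limit (f : ℝ → ℝ) (C : ℝ) (hbd : ∀ L : ℝ, 0 < L → f L ≤ C)
    (hmono : ∀ L1 L2 : ℝ, 0 < L1 → L1 < L2 → f L1 ≤ f L2) :
    ∃ c : ℝ, Filter.Tendsto f Filter.atTop (nhds c) ∧ ∀ L : ℝ, 0 < L → f L ≤ c := by
  set S : Set ℝ := f '' Set.Ioi (0:ℝ) with hS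
  have hne : S.Nonempty := ⟨f 1, ⟨1, Set.mem_Ioi.mpr one_pos, rfl⟩⟩
  have hbdd : BddAbove S := by
    refine ⟨C, ?_⟩
    rintro y ⟨L, hL, rfl⟩
    exact hbd L (Set.mem_Ioi.mp hL)
  refine ⟨sSup S, ?_, fun L hL => le_csSup hbdd ⟨L, Set.mem_Ioi.mpr hL, rfl⟩⟩
  rw [Metric.tendsto_atTop]
  intro ε hε
  obtain ⟨y, hyS, hy⟩ := exists_lt_of_lt_csSup hne (by linarith : sSup S - ε < sSup S)
  obtain ⟨L0, hL0, rfl⟩ := hyS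
  refine ⟨L0, fun L hLL => ?_⟩
  have hL0' : 0 < L0 := Set.mem_Ioi.mp hL0
  have hLpos : 0 < L := lt_of_lt_of_le hL0' hLL
  have hmonoF : f L0 ≤ f L := by
    rcases eq_or_lt_of_le hLL with h | h
    · rw [h]
    · exact hmono L0 L hL0' h
  have hub : f L ≤ sSup S := le_csSup hbdd ⟨L, Set.mem_Ioi.mpr hLpos, rfl⟩
  rw [Real.dist_eq, abs_lt]
  constructor <;> linarith

/-- along any SRLK steady-state branch with no allostery
(`K_i = K_i'`), the signalling function converges to a finite limit `c` as
`L → +∞` and is bounded above by `c` on `(0, ∞)`; i.e. its supremum equals its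
limit at `+∞`. -/
theorem srlk_no_allostery_sup_eq_limit
    (n : ℕ) (K0 : ℝ) (K K' : Fin (n+1) → ℝ) (Nz : ℝ) (N : Fin (n+1) → ℝ)
    (hK0 : 0 < K0) (hK : ∀ i, 0 < K i) (hK' : ∀ i, 0 < K' i)
    (hNz : 0 < Nz) (hN : ∀ i, 0 < N i)
    (hna : ∀ i, K i = K' i)
    (z : ℝ → ℝ) (x : Fin (n+1) → ℝ → ℝ)
    (hbr : SRLKBranch n K0 K K' Nz N z x) :
    ∃ c : ℝ,
      Filter.Tendsto (fun L => srlkSigma n K0 K (z L) L (fun i => x i L))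
        Filter.atTop (nhds c) ∧
      ∀ L : ℝ, 0 < L → srlkSigma n K0 K (z L) L (fun i => x i L) ≤ c := by
  classical
  have hKK' : K = K' := funext fun i => hna i
  subst hKK'
  have br := fun (L : ℝ) (hL : 0 < L) =>
    SRLKAux.bridge n K0 K Nz N L (z L) (fun i => x i L) (hbr.steady L hL)
  have hdpos : ∀ L, 0 < L → 0 < srlkDelta n K L (fun i => x i L) := by
    intro L hL
    unfold srlkDelta
    exact mul_pos hL (Finset.prod_pos fun j _ => mul_pos (hK j) (hbr.posX j L hL))
  have hkpos : ∀ m, 0 < SRLKAux.extF n K m := SRLKAux.extF_pos hK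
  have hypos : ∀ L, 0 < L → ∀ m, 0 < SRLKAux.extF n (fun i => x i L) m :=
    fun L hL => SRLKAux.extF_pos fun i => hbr.posX i L hL
  have hrpos : ∀ L, 0 < L → ∀ i,
      0 < SRLKAux.cR n (SRLKAux.extF n K) (SRLKAux.extF n (fun i => x i L))
            (srlkDelta n K L (fun i => x i L)) i :=
    fun L hL i => SRLKAux.cR_pos hkpos (hypos L hL) (hdpos L hL) i
  have zconst : ∀ L1, 0 < L1 → ∀ L2, 0 < L2 → z L1 = z L2 := by
    intro L1 h1 L2 h2
    obtain ⟨_, _, B1a, B2a, _⟩ := br L1 h1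
    obtain ⟨_, _, B1b, B2b, _⟩ := br L2 h2
    exact SRLKAux.zuniq K0 (N 0) Nz (z L1) (z L2) _ _ hK0 (hbr.posZ L1 h1)
      (hbr.posZ L2 h2) (hrpos L1 h1 0) (hrpos L2 h2 0) B1a B2a B1b B2b
  have hzcpos : 0 < z 1 := hbr.posZ 1 one_pos
  have hzL : ∀ L, 0 < L → z L = z 1 := fun L hL => zconst L hL 1 one_pos
  have hu : (0:ℝ) ≤ K0 * z 1 := (mul_pos hK0 hzcpos).le
  have h1u : (0:ℝ) < 1 + K0 * z 1 := by nlinarith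
  -- monotonicity of δ
  have dmono : ∀ L1 L2, 0 < L1 → L1 < L2 →
      srlkDelta n K L1 (fun i => x i L1) ≤ srlkDelta n K L2 (fun i => x i L2) := by
    intro L1 L2 h1 h12
    have h2 : 0 < L2 := h1.trans h12
    obtain ⟨D1, _, _, B2a, B3a⟩ := br L1 h1
    obtain ⟨D2, _, _, B2b, B3b⟩ := br L2 h2
    rw [hzL L1 h1] at B2a B3a
    rw [hzL L2 h2] at B2b B3b
    set kh := SRLKAux.extF n K with hkh
    set y1 := SRLKAux.extF n (fun i => x i L1) with hy1
    set y2 := SRLKAux.extF n (fun i => x i L2) with hy2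
    set d1 := srlkDelta n K L1 (fun i => x i L1) with hd1
    set d2 := srlkDelta n K L2 (fun i => x i L2) with hd2
    have h0 : SRLKAux.cR n kh y1 d1 0 = SRLKAux.cR n kh y2 d2 0 :=
      mul_left_cancel₀ (ne_of_gt h1u) (B2a.symm.trans B2b)
    set NN : ℕ → ℝ := fun m => if h : m < n+1 then N ⟨m, h⟩ else 0 with hNN
    have he1 : ∀ m, 1 ≤ m → m ≤ n →
        y1 m + (1 + K0 * z 1) * SRLKAux.cR n kh y1 d1 m = NN m := by
      intro m hm hmn
      show _ = if h : m < n+1 then N ⟨m, h⟩ else (0:ℝ)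
      rw [dif_pos (by omega : m < n+1)]
      exact B3a m (by omega) hm
    have he2 : ∀ m, 1 ≤ m → m ≤ n →
        y2 m + (1 + K0 * z 1) * SRLKAux.cR n kh y2 d2 m = NN m := by
      intro m hm hmn
      show _ = if h : m < n+1 then N ⟨m, h⟩ else (0:ℝ)
      rw [dif_pos (by omega : m < n+1)]
      exact B3b m (by omega) hm
    rcases le_total (SRLKAux.cR n kh y1 d1 1) (SRLKAux.cR n kh y2 d2 1) with hc | hc
    · exact (SRLKAux.core n (K0 * z 1) hu NN kh y1 y2 d1 d2 hkpos (hypos L1 h1)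
        (hypos L2 h2) h0 he1 he2 hc).1
    · exfalso
      obtain ⟨hd21, hp12⟩ := SRLKAux.core n (K0 * z 1) hu NN kh y2 y1 d2 d1 hkpos
        (hypos L2 h2) (hypos L1 h1) h0.symm he2 he1 hc
      have hp2 : 0 < SRLKAux.cP kh y2 (n+1) := SRLKAux.cP_pos hkpos (hypos L2 h2) (n+1)
      have hchain : L2 * SRLKAux.cP kh y2 (n+1) ≤ L1 * SRLKAux.cP kh y2 (n+1) := by
        calc L2 * SRLKAux.cP kh y2 (n+1) = d2 := D2.symm
          _ ≤ d1 := hd21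
          _ = L1 * SRLKAux.cP kh y1 (n+1) := D1
          _ ≤ L1 * SRLKAux.cP kh y2 (n+1) := mul_le_mul_of_nonneg_left hp12 h1.le
      have := le_of_mul_le_mul_right hchain hp2
      linarith
  -- monotonicity of σ
  have smono : ∀ L1 L2 : ℝ, 0 < L1 → L1 < L2 →
      srlkSigma n K0 K (z L1) L1 (fun i => x i L1)
        ≤ srlkSigma n K0 K (z L2) L2 (fun i => x i L2) := by
    intro L1 L2 h1 h12
    have h2 : 0 < L2 := h1.trans h12
    have e1 := (br L1 h1).2.1
    have e2 := (br L2 h2).2.1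
    rw [hzL L1 h1] at e1
    rw [hzL L2 h2] at e2
    rw [hzL L1 h1, hzL L2 h2, e1, e2]
    exact mul_le_mul_of_nonneg_left (dmono L1 L2 h1 h12) hu
  obtain ⟨C, hC⟩ := hbr.bddSigma
  exact SRLKAux.sup_limit _ C (fun L hL => (abs_le.mp (hC L hL)).2) smono
end
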